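/- Let B ∈ ℂ^{n×n} (n ≥ 2) be Hermitian positive definite and not diagonal. Then there exist indices i ≠ j with Re(b_{ij}·(B^{-1})_{ji}) ≤ −Γ(B)/(n(n−1)) < 0, so that a greedy pivot choice (i,j) = argmin_{i≠j} Re(b_{ij}(B^{-1})_{ji}) followed by one exact pivot step decreases Γ by at least the factor (1 − 2/(n(n−1))): Γ((T^{-1})* B T^{-1}) ≤ (1 − 2/(n(n−1)))·Γ(B) for the transformation T built from any nonsingular 2×2 matrix S diagonalizing the {i,j} principal block of B. -/

import Mathlib

open Matrix
open scoped ComplexOrder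

noncomputable section

/-- `D_B^{1/2}`: the diagonal matrix whose entries are the square roots of the
diagonal entries of `B`. -/
def sqrtDiag {n : ℕ} (B : Matrix (Fin n) (Fin n) ℂ) : Matrix (Fin n) (Fin n) ℂ :=
  Matrix.diagonal fun i => (Real.sqrt (B i i).re : ℂ)

/-- The diagonal normalization `B̂ = D_B^{-1/2} B D_B^{-1/2}`. -/
def hatM {n : ℕ} (B : Matrix (Fin n) (Fin n) ℂ) : Matrix (Fin n) (Fin n) ℂ :=
  (sqrtDiag B)⁻¹ * B * (sqrtDiag B)⁻¹

/-- The potential function `Γ(B) = tr(B̂⁻¹) − n` (a real number for Hermitian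
positive definite `B`). -/
def Gamma {n : ℕ} (B : Matrix (Fin n) (Fin n) ℂ) : ℝ :=
  (Matrix.trace ((hatM B)⁻¹)).re - n

/-- The set of pivot sets: size-`k` subsets of `[n]`. -/
abbrev PivotSet (n k : ℕ) := {J : Finset (Fin n) // J.card = k}

/-- `B_{JJ}`: the `k × k` principal submatrix of `B` on the rows and columns indexed by `J`
(listed in increasing order). -/
def subJ {n k : ℕ} (J : Finset (Fin n)) (hJ : J.card = k) (B : Matrix (Fin n) (Fin n) ℂ) :
    Matrix (Fin k) (Fin k) ℂ :=
  B.submatrix (fun a => ((J.orderIsoOfFin hJ) a).val) (fun a => ((J.orderIsoOfFin hJ) a).val)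

/-- The `n × n` matrix which is `S` on the `J × J` block (after the order-preserving
identification of `J` with `{1, …, k}`) and agrees with the identity elsewhere; this is
`P_σ* [[S, 0], [0, I]] P_σ` for the order-preserving permutation `σ` with `σ(J) = [k]`. -/
def embedJ {n k : ℕ} (J : Finset (Fin n)) (hJ : J.card = k) (S : Matrix (Fin k) (Fin k) ℂ) :
    Matrix (Fin n) (Fin n) ℂ :=
  Matrix.of fun a b =>
    if ha : a ∈ J then
      if hb : b ∈ J then
        S ((J.orderIsoOfFin hJ).symm ⟨a, ha⟩) ((J.orderIsoOfFin hJ).symm ⟨b, hb⟩)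
      else 0
    else if a = b then 1 else 0


namespace Aux

variable {n k : ℕ} (J : Finset (Fin n)) (hJ : J.card = k)

/-- abbreviation for the increasing enumeration of `J` -/
def e (m : Fin k) : Fin n := (J.orderIsoOfFin hJ m : Fin n)

lemma e_mem (m : Fin k) : e J hJ m ∈ J := (J.orderIsoOfFin hJ m).2

lemma e_inj : Function.Injective (e J hJ) := fun a b h => by
  have := (J.orderIsoOfFin hJ).injective (Subtype.ext h)
  exact this

lemma embed_apply_e (S : Matrix (Fin k) (Fin k) ℂ) (p q : Fin k) :
    embedJ J hJ S (e J hJ p) (e J hJ q) = S p q := by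
  have hp : e J hJ p ∈ J := e_mem J hJ p
  have hq : e J hJ q ∈ J := e_mem J hJ q
  simp only [embedJ, Matrix.of_apply, dif_pos hp, dif_pos hq]
  congr 1
  · exact (J.orderIsoOfFin hJ).symm_apply_apply p
  · exact (J.orderIsoOfFin hJ).symm_apply_apply q

lemma embed_row_notmem (S : Matrix (Fin k) (Fin k) ℂ) {a : Fin n} (ha : a ∉ J) (b : Fin n) :
    embedJ J hJ S a b = if a = b then 1 else 0 := by
  simp only [embedJ, Matrix.of_apply, dif_neg ha]

lemma embed_col_notmem (S : Matrix (Fin k) (Fin k) ℂ) (a : Fin n) {b : Fin n} (hb : b ∉ J) :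
    embedJ J hJ S a b = if a = b then 1 else 0 := by
  by_cases ha : a ∈ J
  · simp only [embedJ, Matrix.of_apply, dif_pos ha, dif_neg hb]
    have : a ≠ b := fun h => hb (h ▸ ha)
    simp [this]
  · simp only [embedJ, Matrix.of_apply, dif_neg ha]

lemma embed_zero_of_mem_notmem (S : Matrix (Fin k) (Fin k) ℂ) {a b : Fin n}
    (ha : a ∈ J) (hb : b ∉ J) : embedJ J hJ S a b = 0 := by
  rw [embed_col_notmem J hJ S a hb]
  have : a ≠ b := fun h => hb (h ▸ ha)
  simp [this]

lemma sum_J (f : Fin n → ℂ) : ∑ c ∈ J, f c = ∑ m : Fin k, f (e J hJ m) := by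
  rw [← Finset.sum_coe_sort J f]
  exact (Fintype.sum_equiv (J.orderIsoOfFin hJ).toEquiv _ _ (fun m => rfl)).symm

lemma sum_eval (f : Fin n → ℂ) (hf : ∀ c ∉ J, f c = 0) :
    ∑ c : Fin n, f c = ∑ m : Fin k, f (e J hJ m) := by
  rw [← sum_J J hJ f]
  exact (Finset.sum_subset (Finset.subset_univ J) (fun c _ hc => hf c hc)).symm

lemma embed_mul (S T : Matrix (Fin k) (Fin k) ℂ) :
    embedJ J hJ S * embedJ J hJ T = embedJ J hJ (S * T) := by
  ext a b
  rw [Matrix.mul_apply]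
  by_cases ha : a ∈ J
  · have h1 : ∀ c ∉ J, embedJ J hJ S a c * embedJ J hJ T c b = 0 := fun c hc => by
      rw [embed_zero_of_mem_notmem J hJ S ha hc, zero_mul]
    rw [sum_eval J hJ _ h1]
    by_cases hb : b ∈ J
    · have ea : ∀ m, embedJ J hJ S a (e J hJ m) = S ((J.orderIsoOfFin hJ).symm ⟨a, ha⟩) m := by
        intro m
        simp only [embedJ, Matrix.of_apply, dif_pos ha, dif_pos (e_mem J hJ m)]
        congr 1
        exact (J.orderIsoOfFin hJ).symm_apply_apply m
      have eb : ∀ m, embedJ J hJ T (e J hJ m) b = T m ((J.orderIsoOfFin hJ).symm ⟨b, hb⟩) := by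
        intro m
        simp only [embedJ, Matrix.of_apply, dif_pos (e_mem J hJ m), dif_pos hb]
        congr 1
        exact (J.orderIsoOfFin hJ).symm_apply_apply m
      rw [Finset.sum_congr rfl (fun m _ => by rw [ea m, eb m])]
      simp only [embedJ, Matrix.of_apply, dif_pos ha, dif_pos hb, Matrix.mul_apply]
    · have : ∀ m, embedJ J hJ T (e J hJ m) b = 0 := fun m =>
        embed_zero_of_mem_notmem J hJ T (e_mem J hJ m) hb
      simp only [this, mul_zero, Finset.sum_const_zero]
      exact (embed_zero_of_mem_notmem J hJ (S * T) ha hb).symm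
  · simp only [embed_row_notmem J hJ S ha]
    rw [Finset.sum_eq_single a (fun c _ hc => by simp [Ne.symm hc]) (by simp)]
    simp only [if_pos rfl, one_mul]
    rw [embed_row_notmem J hJ T ha, embed_row_notmem J hJ (S * T) ha]
    simp

end Aux

namespace Aux2
open Aux

variable {n k : ℕ} (J : Finset (Fin n)) (hJ : J.card = k)

lemma embed_one : embedJ J hJ 1 = 1 := by
  ext a b
  by_cases ha : a ∈ J
  · by_cases hb : b ∈ J
    · simp only [embedJ, Matrix.of_apply, dif_pos ha, dif_pos hb, Matrix.one_apply]
      have hiff : ((J.orderIsoOfFin hJ).symm ⟨a, ha⟩ = (J.orderIsoOfFin hJ).symm ⟨b, hb⟩) ↔ a = b := by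
        rw [(J.orderIsoOfFin hJ).symm.injective.eq_iff, Subtype.mk_eq_mk]
      simp [Matrix.one_apply, hiff]
    · rw [embed_zero_of_mem_notmem J hJ 1 ha hb, Matrix.one_apply]
      have : a ≠ b := fun h => hb (h ▸ ha)
      simp [this]
  · rw [embed_row_notmem J hJ 1 ha, Matrix.one_apply]

lemma embed_conjTranspose (S : Matrix (Fin k) (Fin k) ℂ) :
    (embedJ J hJ S)ᴴ = embedJ J hJ Sᴴ := by
  ext a b
  rw [Matrix.conjTranspose_apply]
  by_cases ha : a ∈ J
  · by_cases hb : b ∈ J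
    · simp only [embedJ, Matrix.of_apply, dif_pos ha, dif_pos hb, Matrix.conjTranspose_apply]
    · rw [embed_row_notmem J hJ S hb, embed_zero_of_mem_notmem J hJ Sᴴ ha hb]
      have : b ≠ a := fun h => hb (h ▸ ha)
      simp [this]
  · rw [embed_col_notmem J hJ S b ha, embed_row_notmem J hJ Sᴴ ha]
    by_cases hab : a = b
    · subst hab; simp
    · simp [hab, Ne.symm hab]

lemma embed_inv (S : Matrix (Fin k) (Fin k) ℂ) (hS : IsUnit S.det) :
    (embedJ J hJ S)⁻¹ = embedJ J hJ S⁻¹ := by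
  apply Matrix.inv_eq_right_inv
  rw [embed_mul, Matrix.mul_nonsing_inv _ hS, embed_one]

lemma isUnit_embed (S : Matrix (Fin k) (Fin k) ℂ) (hS : IsUnit S.det) :
    IsUnit (embedJ J hJ S).det := by
  apply Matrix.isUnit_det_of_right_inverse (B := embedJ J hJ S⁻¹)
  rw [embed_mul, Matrix.mul_nonsing_inv _ hS, embed_one]

end Aux2

namespace Aux3
open Aux Aux2

variable {n k : ℕ} (J : Finset (Fin n)) (hJ : J.card = k)

lemma subJ_apply (X : Matrix (Fin n) (Fin n) ℂ) (p q : Fin k) :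
    subJ J hJ X p q = X (e J hJ p) (e J hJ q) := rfl

/-- row of a product with embed on the left, for an index outside J -/
lemma mul_embed_row_notmem (T : Matrix (Fin k) (Fin k) ℂ) (X : Matrix (Fin n) (Fin n) ℂ)
    {a : Fin n} (ha : a ∉ J) (b : Fin n) : (embedJ J hJ T * X) a b = X a b := by
  rw [Matrix.mul_apply]
  rw [Finset.sum_eq_single a (fun c _ hc => by rw [embed_row_notmem J hJ T ha]; simp [Ne.symm hc])
    (by simp)]
  rw [embed_row_notmem J hJ T ha]; simp

lemma mul_embed_col_notmem (T : Matrix (Fin k) (Fin k) ℂ) (X : Matrix (Fin n) (Fin n) ℂ)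
    (a : Fin n) {b : Fin n} (hb : b ∉ J) : (X * embedJ J hJ T) a b = X a b := by
  rw [Matrix.mul_apply]
  rw [Finset.sum_eq_single b (fun c _ hc => by rw [embed_col_notmem J hJ T c hb]; simp [hc])
    (by simp)]
  rw [embed_col_notmem J hJ T b hb]; simp

lemma sandwich_notmem (T₁ T₂ : Matrix (Fin k) (Fin k) ℂ) (X : Matrix (Fin n) (Fin n) ℂ)
    {a : Fin n} (ha : a ∉ J) {b : Fin n} (hb : b ∉ J) :
    (embedJ J hJ T₁ * X * embedJ J hJ T₂) a b = X a b := by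
  rw [mul_embed_col_notmem J hJ T₂ _ a hb, mul_embed_row_notmem J hJ T₁ X ha b]

/-- the J-block of a sandwich -/
lemma sandwich_block (T₁ T₂ : Matrix (Fin k) (Fin k) ℂ) (X : Matrix (Fin n) (Fin n) ℂ)
    (p q : Fin k) :
    (embedJ J hJ T₁ * X * embedJ J hJ T₂) (e J hJ p) (e J hJ q) =
      (T₁ * subJ J hJ X * T₂) p q := by
  have hrow : ∀ b : Fin n, (embedJ J hJ T₁ * X) (e J hJ p) b = ∑ m : Fin k, T₁ p m * X (e J hJ m) b := by
    intro b
    rw [Matrix.mul_apply]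
    rw [sum_eval J hJ _ (fun c hc => by rw [embed_zero_of_mem_notmem J hJ T₁ (e_mem J hJ p) hc, zero_mul])]
    refine Finset.sum_congr rfl (fun m _ => ?_)
    rw [embed_apply_e J hJ T₁ p m]
  rw [Matrix.mul_apply]
  rw [sum_eval J hJ _ (fun c hc => by
    rw [embed_row_notmem J hJ T₂ hc]
    have : c ≠ e J hJ q := fun h => hc (h ▸ e_mem J hJ q)
    simp [this])]
  rw [Finset.sum_congr rfl (fun m _ => by rw [hrow, embed_apply_e J hJ T₂ m q])]
  rw [Matrix.mul_apply]
  refine Finset.sum_congr rfl (fun m _ => ?_)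
  rw [Matrix.mul_apply]
  simp only [Finset.sum_mul, subJ_apply]

end Aux3

namespace Aux4
open Aux

variable {n : ℕ}

lemma posDef_conj {N B : Matrix (Fin n) (Fin n) ℂ} (hB : B.PosDef) (hN : IsUnit N.det) :
    (Nᴴ * B * N).PosDef := by
  refine Matrix.PosDef.of_dotProduct_mulVec_pos ?_ (fun x hx => ?_)
  · have := hB.isHermitian
    rw [Matrix.IsHermitian] at this ⊢
    rw [Matrix.conjTranspose_mul, Matrix.conjTranspose_mul, Matrix.conjTranspose_conjTranspose,
      this, Matrix.mul_assoc]
  · have hNx : N *ᵥ x ≠ 0 := by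
      have hinj : Function.Injective N.mulVec :=
        Matrix.mulVec_injective_iff_isUnit.mpr ((Matrix.isUnit_iff_isUnit_det N).mpr hN)
      intro h
      exact hx (hinj (by simpa using h))
    have := hB.dotProduct_mulVec_pos hNx
    rwa [star_mulVec, Matrix.mulVec_mulVec, ← Matrix.dotProduct_mulVec, Matrix.mulVec_mulVec,
      ← Matrix.mul_assoc] at this

lemma posDef_diag_re_pos {B : Matrix (Fin n) (Fin n) ℂ} (hB : B.PosDef) (i : Fin n) :
    0 < (B i i).re := by
  have h := hB.dotProduct_mulVec_pos (x := Pi.single i 1) (by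
    intro h
    have := congrFun h i
    simp [Pi.single_eq_same] at this)
  rw [Matrix.mulVec_single] at h
  have hs : star (Pi.single i 1 : Fin n → ℂ) = Pi.single i 1 := by
    ext j; simp [Pi.single_apply, apply_ite (star : ℂ → ℂ)]
  rw [hs, single_dotProduct] at h
  simp only [one_mul, mul_one] at h
  simpa using (Complex.lt_def.mp h).1

lemma herm_diag_im_zero {B : Matrix (Fin n) (Fin n) ℂ} (hB : B.IsHermitian) (i : Fin n) :
    (B i i).im = 0 := by
  have := hB.apply i i
  have h2 := congrArg Complex.im this
  simp only [Complex.star_def, Complex.conj_im] at h2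
  linarith

end Aux4

namespace Aux5
open Aux Aux4

variable {n : ℕ} {B : Matrix (Fin n) (Fin n) ℂ}

lemma sqrt_ne (hB : B.PosDef) (i : Fin n) : ((Real.sqrt (B i i).re : ℝ) : ℂ) ≠ 0 := by
  rw [Complex.ofReal_ne_zero]
  exact (Real.sqrt_pos.mpr (posDef_diag_re_pos hB i)).ne'

lemma sqrtDiag_det (hB : B.PosDef) : IsUnit (sqrtDiag B).det := by
  rw [sqrtDiag, Matrix.det_diagonal]
  rw [isUnit_iff_ne_zero]
  exact Finset.prod_ne_zero_iff.mpr (fun i _ => sqrt_ne hB i)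

lemma hatM_inv_eq (hB : B.PosDef) : (hatM B)⁻¹ = sqrtDiag B * B⁻¹ * sqrtDiag B := by
  apply Matrix.inv_eq_right_inv
  have h1 : (sqrtDiag B)⁻¹ * sqrtDiag B = 1 := Matrix.nonsing_inv_mul _ (sqrtDiag_det hB)
  have h2 : B * B⁻¹ = 1 :=
    Matrix.mul_nonsing_inv _ ((Matrix.isUnit_iff_isUnit_det _).mp hB.isUnit)
  rw [hatM]
  calc (sqrtDiag B)⁻¹ * B * (sqrtDiag B)⁻¹ * (sqrtDiag B * B⁻¹ * sqrtDiag B)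
      = (sqrtDiag B)⁻¹ * (B * (((sqrtDiag B)⁻¹ * sqrtDiag B) * (B⁻¹ * sqrtDiag B))) := by
        simp only [Matrix.mul_assoc]
    _ = (sqrtDiag B)⁻¹ * (B * (B⁻¹ * sqrtDiag B)) := by rw [h1, Matrix.one_mul]
    _ = (sqrtDiag B)⁻¹ * ((B * B⁻¹) * sqrtDiag B) := by simp only [Matrix.mul_assoc]
    _ = (sqrtDiag B)⁻¹ * sqrtDiag B := by rw [h2, Matrix.one_mul]
    _ = 1 := h1

lemma diag_eq_re (hH : B.IsHermitian) (i : Fin n) : B i i = ((B i i).re : ℂ) := by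
  apply Complex.ext
  · simp
  · simp [herm_diag_im_zero hH i]

lemma gamma_eq (hB : B.PosDef) : Gamma B = (∑ i, (B i i * B⁻¹ i i).re) - n := by
  rw [Gamma, hatM_inv_eq hB, Matrix.trace]
  congr 1
  rw [Complex.re_sum]
  refine Finset.sum_congr rfl (fun i _ => ?_)
  rw [Matrix.diag_apply, sqrtDiag, Matrix.mul_diagonal, Matrix.diagonal_mul]
  rw [diag_eq_re hB.isHermitian i]
  simp only [Complex.ofReal_re]
  rw [show ((Real.sqrt (B i i).re : ℝ) : ℂ) * B⁻¹ i i * ((Real.sqrt (B i i).re : ℝ) : ℂ)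
      = (((Real.sqrt (B i i).re * Real.sqrt (B i i).re : ℝ)) : ℂ) * B⁻¹ i i by
    push_cast; ring]
  rw [Real.mul_self_sqrt (posDef_diag_re_pos hB i).le]

end Aux5

namespace Aux6
open Aux Aux4 Aux5

variable {n : ℕ} {B : Matrix (Fin n) (Fin n) ℂ}

lemma sqrtDiag_inv (hB : B.PosDef) :
    (sqrtDiag B)⁻¹ = Matrix.diagonal (fun i => ((Real.sqrt (B i i).re : ℝ) : ℂ)⁻¹) := by
  apply Matrix.inv_eq_right_inv
  rw [sqrtDiag, Matrix.diagonal_mul_diagonal, ← Matrix.diagonal_one]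
  exact congrArg Matrix.diagonal (funext fun i => mul_inv_cancel₀ (sqrt_ne hB i))

lemma hatM_posDef (hB : B.PosDef) : (hatM B).PosDef := by
  have hherm : (sqrtDiag B)⁻¹ᴴ = (sqrtDiag B)⁻¹ := by
    rw [sqrtDiag_inv hB, Matrix.diagonal_conjTranspose]
    refine congrArg Matrix.diagonal (funext fun i => ?_)
    simp [Pi.star_apply, Complex.star_def, Complex.conj_ofReal]
  have hdet : IsUnit ((sqrtDiag B)⁻¹).det := by
    rw [Matrix.det_nonsing_inv]
    exact isUnit_ringInverse.mpr (sqrtDiag_det hB)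
  have := posDef_conj (N := (sqrtDiag B)⁻¹) hB hdet
  rwa [hherm] at this

lemma hatM_diag_one (hB : B.PosDef) (i : Fin n) : hatM B i i = 1 := by
  rw [hatM, sqrtDiag_inv hB, Matrix.mul_diagonal, Matrix.diagonal_mul,
    diag_eq_re hB.isHermitian i]
  rw [← Complex.ofReal_inv, ← Complex.ofReal_mul, ← Complex.ofReal_mul, ← Complex.ofReal_one]
  congr 1
  have hr := posDef_diag_re_pos hB i
  have hs : Real.sqrt (B i i).re * Real.sqrt (B i i).re = (B i i).re :=
    Real.mul_self_sqrt hr.le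
  field_simp
  simp [Real.sq_sqrt hr.le, hr.ne']

lemma hatM_offdiag (hB : B.PosDef) {i j : Fin n} (hij : B i j ≠ 0) : hatM B i j ≠ 0 := by
  rw [hatM, sqrtDiag_inv hB, Matrix.mul_diagonal, Matrix.diagonal_mul]
  exact mul_ne_zero (mul_ne_zero (inv_ne_zero (sqrt_ne hB i)) hij) (inv_ne_zero (sqrt_ne hB j))

lemma trace_conj_pos {N K : Matrix (Fin n) (Fin n) ℂ} (hN : N.PosDef) (hK : K ≠ 0) :
    0 < (Matrix.trace (Kᴴ * N * K)).re := by
  have hentry : ∀ j, (Kᴴ * N * K) j j =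
      star (fun p => K p j) ⬝ᵥ N *ᵥ (fun p => K p j) := by
    intro j
    simp only [Matrix.mul_apply, dotProduct, Matrix.mulVec, Matrix.conjTranspose_apply,
      Pi.star_apply, Finset.sum_mul, Finset.mul_sum, mul_assoc]
    rw [Finset.sum_comm]
  have hnonneg : ∀ j, 0 ≤ ((Kᴴ * N * K) j j).re := by
    intro j
    rw [hentry j]
    by_cases hc : (fun p => K p j) = 0
    · rw [hc]; simp
    · exact (Complex.lt_def.mp (hN.dotProduct_mulVec_pos hc)).1.le
  obtain ⟨p0, j0, hpj⟩ : ∃ p j, K p j ≠ 0 := by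
    by_contra h
    push_neg at h
    exact hK (by ext p j; simpa using h p j)
  have hpos : 0 < ((Kᴴ * N * K) j0 j0).re := by
    rw [hentry j0]
    have hc : (fun p => K p j0) ≠ 0 := fun h => hpj (by simpa using congrFun h p0)
    exact (Complex.lt_def.mp (hN.dotProduct_mulVec_pos hc)).1
  rw [Matrix.trace, Complex.re_sum]
  exact Finset.sum_pos' (fun j _ => hnonneg j) ⟨j0, Finset.mem_univ j0, hpos⟩

lemma gamma_pos (hB : B.PosDef) (hnd : ¬ B.IsDiag) : 0 < Gamma B := by
  set A := hatM B with hA_def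
  have hA : A.PosDef := hatM_posDef hB
  have hdetA : IsUnit A.det := (Matrix.isUnit_iff_isUnit_det _).mp hA.isUnit
  have h1 : A * A⁻¹ = 1 := Matrix.mul_nonsing_inv _ hdetA
  have h1' : A⁻¹ * A = 1 := Matrix.nonsing_inv_mul _ hdetA
  have hid : (A - 1) * A⁻¹ * (A - 1) = A + A⁻¹ - (2 : ℂ) • 1 := by
    have hexp : (A - 1) * A⁻¹ * (A - 1) = A * A⁻¹ * A - A * A⁻¹ - A⁻¹ * A + A⁻¹ := by
      noncomm_ring
    rw [hexp, h1, h1', Matrix.one_mul, two_smul]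
    abel
  have hKherm : (A - 1)ᴴ = A - 1 := by
    rw [Matrix.conjTranspose_sub, Matrix.conjTranspose_one, hA.isHermitian.eq]
  have hKne : A - 1 ≠ 0 := by
    obtain ⟨i, j, hij, hBij⟩ : ∃ i j, i ≠ j ∧ B i j ≠ 0 := by
      by_contra h
      push_neg at h
      exact hnd (fun i j hij => h i j hij)
    intro h
    have := congrFun (congrFun h i) j
    simp only [Matrix.sub_apply, Matrix.zero_apply, Matrix.one_apply_ne hij, sub_zero] at this
    exact hatM_offdiag hB hBij this
  have htrA : Matrix.trace A = (n : ℂ) := by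
    have hsum : ∑ i : Fin n, A.diag i = ∑ _i : Fin n, (1 : ℂ) :=
      Finset.sum_congr rfl (fun i _ => hatM_diag_one hB i)
    rw [Matrix.trace, hsum]
    simp
  have htr : (Matrix.trace ((A - 1)ᴴ * A⁻¹ * (A - 1))).re = Gamma B := by
    rw [hKherm, hid, Matrix.trace_sub, Matrix.trace_add, Matrix.trace_smul, Matrix.trace_one,
      htrA]
    simp only [Complex.sub_re, Complex.add_re, smul_eq_mul]
    rw [Gamma]
    simp [Complex.ofReal_natCast]
    ring
  rw [← htr]
  exact trace_conj_pos hA.inv hKne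

end Aux6

namespace Main
open Aux Aux2 Aux3 Aux4 Aux5 Aux6

theorem greedy' {n : ℕ} (hn : 2 ≤ n)
    (B : Matrix (Fin n) (Fin n) ℂ) (hB : B.PosDef) (hnd : ¬ B.IsDiag) :
    ∃ (i j : Fin n) (hij : i ≠ j),
      (B i j * B⁻¹ j i).re ≤ -(Gamma B / ((n : ℝ) * ((n : ℝ) - 1))) ∧
      -(Gamma B / ((n : ℝ) * ((n : ℝ) - 1))) < 0 ∧
      ∀ S : Matrix (Fin 2) (Fin 2) ℂ, IsUnit S.det →
        (Sᴴ * subJ {i, j} (Finset.card_pair hij) B * S).IsDiag →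
        Gamma (((embedJ {i, j} (Finset.card_pair hij) S⁻¹)⁻¹)ᴴ * B *
            (embedJ {i, j} (Finset.card_pair hij) S⁻¹)⁻¹) ≤
          (1 - 2 / ((n : ℝ) * ((n : ℝ) - 1))) * Gamma B := by
  have hC : (B⁻¹).PosDef := hB.inv
  have hdetB : IsUnit B.det := (Matrix.isUnit_iff_isUnit_det _).mp hB.isUnit
  have hBC : B * B⁻¹ = 1 := Matrix.mul_nonsing_inv _ hdetB
  set q : ℝ := (n : ℝ) * ((n : ℝ) - 1) with hq_def
  have hq_pos : 0 < q := by
    have h2 : (2 : ℝ) ≤ (n : ℝ) := by exact_mod_cast hn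
    have : (0:ℝ) < (n:ℝ) := by linarith
    have : (0:ℝ) < (n:ℝ) - 1 := by linarith
    positivity
  set f : Fin n × Fin n → ℝ := fun p => (B p.1 p.2 * B⁻¹ p.2 p.1).re with hf_def
  set P : Finset (Fin n × Fin n) := Finset.univ.filter (fun p => p.1 ≠ p.2) with hP_def
  have hPne : P.Nonempty := by
    refine ⟨(⟨0, by omega⟩, ⟨1, by omega⟩), ?_⟩
    simp only [hP_def, Finset.mem_filter, Finset.mem_univ, true_and]
    intro h
    have := congrArg Fin.val h
    simp at this
  obtain ⟨p, hpP, hmin⟩ := P.exists_min_image f hPne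
  obtain ⟨i, j⟩ := p
  have hij : i ≠ j := by
    have := (Finset.mem_filter.mp hpP).2
    exact this
  -- sum over all pairs is n
  have hrow : ∀ k : Fin n, ∑ l : Fin n, (B k l * B⁻¹ l k) = 1 := by
    intro k
    have : (B * B⁻¹) k k = (1 : Matrix (Fin n) (Fin n) ℂ) k k := by rw [hBC]
    rw [Matrix.mul_apply] at this
    rw [this, Matrix.one_apply_eq]
  have hsum_all : ∑ p : Fin n × Fin n, f p = n := by
    rw [Fintype.sum_prod_type]
    have : ∀ k : Fin n, ∑ l : Fin n, f (k, l) = 1 := by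
      intro k
      have h := congrArg Complex.re (hrow k)
      rw [Complex.re_sum] at h
      simp only [Complex.one_re] at h
      exact h
    rw [Finset.sum_congr rfl (fun k _ => this k)]
    simp
  -- diagonal sum
  have hdiag_eq : Finset.univ.filter (fun p : Fin n × Fin n => ¬ p.1 ≠ p.2) =
      Finset.univ.image (fun k : Fin n => (k, k)) := by
    ext ⟨a, b⟩
    simp only [Finset.mem_filter, Finset.mem_univ, true_and, not_not, Finset.mem_image,
      Prod.mk.injEq]
    constructor
    · intro h; exact ⟨a, rfl, h⟩
    · rintro ⟨k, rfl, rfl⟩; rfl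
  have hinj : Function.Injective (fun k : Fin n => (k, k)) := fun a b h => (Prod.mk.injEq _ _ _ _).mp h |>.1
  have hsum_diag : ∑ p ∈ Finset.univ.filter (fun p : Fin n × Fin n => ¬ p.1 ≠ p.2), f p
      = Gamma B + n := by
    rw [hdiag_eq, Finset.sum_image (fun a _ b _ h => hinj h)]
    rw [gamma_eq hB]
    simp only [hf_def]
    ring
  have hsum_P : ∑ p ∈ P, f p = -(Gamma B) := by
    have := Finset.sum_filter_add_sum_filter_not Finset.univ (fun p : Fin n × Fin n => p.1 ≠ p.2) f
    rw [hsum_diag] at this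
    rw [hsum_all] at this
    have hPP : P = Finset.univ.filter (fun p : Fin n × Fin n => p.1 ≠ p.2) := hP_def
    linarith [this]
  -- cardinality of P
  have hcard : (P.card : ℝ) = q := by
    have h1 := Finset.card_filter_add_card_filter_not
      (s := (Finset.univ : Finset (Fin n × Fin n))) (p := fun p => p.1 ≠ p.2)
    have h2 : (Finset.univ.filter (fun p : Fin n × Fin n => ¬ p.1 ≠ p.2)).card = n := by
      rw [hdiag_eq, Finset.card_image_of_injective _ hinj, Finset.card_univ, Fintype.card_fin]
    have h3 : (Finset.univ : Finset (Fin n × Fin n)).card = n * n := by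
      rw [Finset.card_univ, Fintype.card_prod, Fintype.card_fin]
    rw [h2, h3] at h1
    rw [← hP_def] at h1
    have : P.card = n * n - n := by omega
    rw [this]
    have hle : n ≤ n * n := Nat.le_mul_of_pos_left n (by omega)
    push_cast [Nat.cast_sub hle]
    ring
  -- min bound
  have hfp_le : f (i, j) ≤ -(Gamma B / q) := by
    have hnsmul := Finset.card_nsmul_le_sum P f (f (i, j)) (fun x hx => hmin x hx)
    rw [hsum_P, nsmul_eq_mul, hcard] at hnsmul
    have h4 : f (i, j) ≤ (-(Gamma B)) / q := (le_div_iff₀ hq_pos).mpr (by linarith)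
    rw [show -(Gamma B / q) = (-(Gamma B)) / q from (neg_div _ _).symm]
    exact h4
  have hgpos : 0 < Gamma B := gamma_pos hB hnd
  have hneg : -(Gamma B / q) < 0 := by
    have : 0 < Gamma B / q := div_pos hgpos hq_pos
    linarith
  refine ⟨i, j, hij, hfp_le, hneg, ?_⟩
  intro S hS hdiag
  have hJ2 : ({i, j} : Finset (Fin n)).card = 2 := Finset.card_pair hij
  have hSinv_det : IsUnit (S⁻¹).det := by
    rw [Matrix.det_nonsing_inv]
    exact isUnit_ringInverse.mpr hS
  have hSH : IsUnit (Sᴴ).det := by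
    rw [Matrix.det_conjTranspose]
    exact isUnit_star.mpr hS
  have hSHinv : IsUnit ((Sᴴ)⁻¹).det := by
    rw [Matrix.det_nonsing_inv]
    exact isUnit_ringInverse.mpr hSH
  have hEinv : (embedJ {i, j} (Finset.card_pair hij) S⁻¹)⁻¹
      = embedJ {i, j} (Finset.card_pair hij) S := by
    rw [embed_inv _ _ S⁻¹ hSinv_det, Matrix.nonsing_inv_nonsing_inv _ hS]
  rw [hEinv, embed_conjTranspose]
  set M := embedJ {i, j} (Finset.card_pair hij) Sᴴ * B * embedJ {i, j} (Finset.card_pair hij) S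
    with hM_def
  have hM : M.PosDef := by
    have := posDef_conj hB (isUnit_embed _ (Finset.card_pair hij) S hS)
    rwa [embed_conjTranspose] at this
  have hMinv : M⁻¹ = embedJ {i, j} (Finset.card_pair hij) S⁻¹ * B⁻¹ *
      embedJ {i, j} (Finset.card_pair hij) (Sᴴ)⁻¹ := by
    rw [hM_def, Matrix.mul_inv_rev, Matrix.mul_inv_rev]
    rw [embed_inv _ _ S hS, embed_inv _ _ Sᴴ hSH, Matrix.mul_assoc]
  -- block values
  have hblockM : ∀ p q : Fin 2, M (e {i, j} hJ2 p) (e {i, j} hJ2 q)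
      = (Sᴴ * subJ {i, j} hJ2 B * S) p q := fun p q =>
    sandwich_block {i, j} hJ2 Sᴴ S B p q
  have hblockMinv : ∀ p q : Fin 2, M⁻¹ (e {i, j} hJ2 p) (e {i, j} hJ2 q)
      = (S⁻¹ * subJ {i, j} hJ2 B⁻¹ * (Sᴴ)⁻¹) p q := fun p q => by
    rw [hMinv]
    exact sandwich_block {i, j} hJ2 S⁻¹ (Sᴴ)⁻¹ B⁻¹ p q
  set D := Sᴴ * subJ {i, j} hJ2 B * S with hD_def
  set G := S⁻¹ * subJ {i, j} hJ2 B⁻¹ * (Sᴴ)⁻¹ with hG_def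
  -- trace identity
  have htraceDG : Matrix.trace (D * G)
      = Matrix.trace (subJ {i, j} hJ2 B * subJ {i, j} hJ2 B⁻¹) := by
    have hDG : D * G = Sᴴ * (subJ {i, j} hJ2 B * (subJ {i, j} hJ2 B⁻¹ * (Sᴴ)⁻¹)) := by
      calc D * G
          = Sᴴ * (subJ {i, j} hJ2 B * ((S * S⁻¹) * (subJ {i, j} hJ2 B⁻¹ * (Sᴴ)⁻¹))) := by
            rw [hD_def, hG_def]; simp only [Matrix.mul_assoc]
        _ = _ := by rw [Matrix.mul_nonsing_inv _ hS, Matrix.one_mul]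
    rw [hDG, Matrix.trace_mul_comm]
    rw [Matrix.mul_assoc, Matrix.mul_assoc, Matrix.nonsing_inv_mul _ hSH, Matrix.mul_one]
  -- diagonal sum of block products equals trace
  have hdiagsum : ∑ m : Fin 2, D m m * G m m = Matrix.trace (D * G) := by
    rw [Matrix.trace]
    refine Finset.sum_congr rfl (fun m _ => ?_)
    rw [Matrix.diag_apply, Matrix.mul_apply]
    rw [Finset.sum_eq_single m (fun l _ hl => by rw [hdiag (Ne.symm hl), zero_mul])
      (fun h => absurd (Finset.mem_univ m) h)]
  -- sum over J of complex products
  have ha : e {i, j} hJ2 0 ∈ ({i, j} : Finset (Fin n)) := e_mem _ hJ2 0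
  have hb : e {i, j} hJ2 1 ∈ ({i, j} : Finset (Fin n)) := e_mem _ hJ2 1
  have hab : e {i, j} hJ2 0 ≠ e {i, j} hJ2 1 := fun h => by
    have := e_inj {i, j} hJ2 h
    exact absurd this (by decide)
  have hoffd : B (e {i, j} hJ2 0) (e {i, j} hJ2 1) * B⁻¹ (e {i, j} hJ2 1) (e {i, j} hJ2 0)
      + B (e {i, j} hJ2 1) (e {i, j} hJ2 0) * B⁻¹ (e {i, j} hJ2 0) (e {i, j} hJ2 1)
      = B i j * B⁻¹ j i + B j i * B⁻¹ i j := by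
    rcases Finset.mem_insert.mp ha with h0 | h0
    · rcases Finset.mem_insert.mp hb with h1 | h1
      · exact absurd (h0.trans h1.symm) hab
      · rw [Finset.mem_singleton] at h1
        rw [h0, h1]
    · rw [Finset.mem_singleton] at h0
      rcases Finset.mem_insert.mp hb with h1 | h1
      · rw [h0, h1]; ring
      · rw [Finset.mem_singleton] at h1
        exact absurd (h0.trans h1.symm) hab
  have hJc : ∑ k ∈ ({i, j} : Finset (Fin n)), M k k * M⁻¹ k k
      = (∑ k ∈ ({i, j} : Finset (Fin n)), B k k * B⁻¹ k k)
        + (B i j * B⁻¹ j i + B j i * B⁻¹ i j) := by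
    rw [sum_J _ hJ2 (fun k => M k k * M⁻¹ k k), sum_J _ hJ2 (fun k => B k k * B⁻¹ k k)]
    rw [Finset.sum_congr rfl (fun m _ => by rw [hblockM m m, hblockMinv m m])]
    rw [show (∑ m : Fin 2, D m m * G m m) = Matrix.trace (D * G) from hdiagsum, htraceDG]
    rw [Matrix.trace]
    simp only [Matrix.diag_apply, Matrix.mul_apply, subJ_apply, Fin.sum_univ_two]
    rw [← hoffd]
    ring
  -- outside indices
  have houtside : ∀ k : Fin n, k ∉ ({i, j} : Finset (Fin n)) →
      M k k = B k k ∧ M⁻¹ k k = B⁻¹ k k := by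
    intro k hk
    constructor
    · exact sandwich_notmem _ (Finset.card_pair hij) Sᴴ S B hk hk
    · rw [hMinv]
      exact sandwich_notmem _ (Finset.card_pair hij) S⁻¹ (Sᴴ)⁻¹ B⁻¹ hk hk
  have hkey : (∑ k : Fin n, M k k * M⁻¹ k k)
      = (∑ k : Fin n, B k k * B⁻¹ k k) + (B i j * B⁻¹ j i + B j i * B⁻¹ i j) := by
    rw [← Finset.sum_add_sum_compl ({i, j} : Finset (Fin n)) (fun k => M k k * M⁻¹ k k),
      ← Finset.sum_add_sum_compl ({i, j} : Finset (Fin n)) (fun k => B k k * B⁻¹ k k)]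
    have hcompl : ∑ k ∈ ({i, j} : Finset (Fin n))ᶜ, M k k * M⁻¹ k k
        = ∑ k ∈ ({i, j} : Finset (Fin n))ᶜ, B k k * B⁻¹ k k :=
      Finset.sum_congr rfl (fun k hk => by
        obtain ⟨h1, h2⟩ := houtside k (Finset.mem_compl.mp hk)
        rw [h1, h2])
    rw [hcompl, hJc]
    ring
  -- conjugate pair
  have hconj : (B j i * B⁻¹ i j).re = (B i j * B⁻¹ j i).re := by
    have h1 : B j i = star (B i j) := (hB.isHermitian.apply j i).symm
    have h2 : B⁻¹ i j = star (B⁻¹ j i) := (hC.isHermitian.apply i j).symm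
    rw [h1, h2, ← star_mul', Complex.star_def, Complex.conj_re]
  -- final assembly
  have hGB := gamma_eq hB
  rw [gamma_eq hM]
  rw [← Complex.re_sum, hkey, Complex.add_re, Complex.add_re, Complex.re_sum]
  have hfij : (B i j * B⁻¹ j i).re ≤ -(Gamma B / q) := hfp_le
  have hring : (1 - 2 / q) * Gamma B = Gamma B - 2 * (Gamma B / q) := by ring
  rw [hconj]
  linarith

end Main

/-- greedy pivoting: if `B` is Hermitian positive definite and not
diagonal, there are indices `i ≠ j` with `Re(b_{ij}(B⁻¹)_{ji}) ≤ −Γ(B)/(n(n−1)) < 0`,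
and one exact pivot step on `{i,j}` decreases `Γ` by the factor `1 − 2/(n(n−1))`. -/
theorem greedy_pivot_decreases_gamma {n : ℕ} (hn : 2 ≤ n)
    (B : Matrix (Fin n) (Fin n) ℂ) (hB : B.PosDef) (hnd : ¬ B.IsDiag) :
    ∃ (i j : Fin n) (hij : i ≠ j),
      (B i j * B⁻¹ j i).re ≤ -(Gamma B / ((n : ℝ) * ((n : ℝ) - 1))) ∧
      -(Gamma B / ((n : ℝ) * ((n : ℝ) - 1))) < 0 ∧
      ∀ S : Matrix (Fin 2) (Fin 2) ℂ, IsUnit S.det →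
        (Sᴴ * subJ {i, j} (Finset.card_pair hij) B * S).IsDiag →
        Gamma (((embedJ {i, j} (Finset.card_pair hij) S⁻¹)⁻¹)ᴴ * B *
            (embedJ {i, j} (Finset.card_pair hij) S⁻¹)⁻¹) ≤
          (1 - 2 / ((n : ℝ) * ((n : ℝ) - 1))) * Gamma B :=
  Main.greedy' hn B hB hnd
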